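/- Let G be a map (possibly with contractible loops or double edges) on an orientable surface of genus g with a fixed reference orientation, and let β(p,d) = Σ_{e∈G} p_e d_{e*} for flows p on G and d on the dual G*. Fix closed walks B*_1,…,B*_{2g} of G* forming a basis for the homology. Then for flows φ, φ' on G, the following are equivalent: (1) φ - φ' lies in the subgroup F generated by counterclockwise facial walks of G; (2) β(φ,W) = β(φ',W) for every closed walk W of G*; (3) β(φ,F) = β(φ',F) for every counterclockwise facial walk F of G* and β(φ,B*_i) = β(φ',B*_i) for all 1 ≤ i ≤ 2g. -/

import Mathlib

/-!
Combinatorial framework for flows and homology on a map on an orientable surface.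

* A `Multigraph` is a set of edges with a fixed reference orientation (source/target);
  flows on it are elements of ℤ^E.
* A dart is an edge together with a direction of traversal (`true` = forward).
* `charFlow l` is the characteristic flow of a list of darts (a walk):
  #forward traversals − #backward traversals of each edge.
* `beta p q = Σ_e p_e q_{e*}` is the pairing between flows on G and flows on its dual G*
  (dual flows are indexed by the same edge set via e ↦ e*).
* A `SurfaceMap` records, for each edge, the faces on its left and right, and for each
  face its counterclockwise facial walk; the dual graph G* has the faces as vertices and
  e* oriented from the face on the right of e to the face on the left.
* `GoodFacialWalks` is the defining geometric property of the ccw facial walks: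
  the ccw facial walk of a face f uses e forward iff f is on the left of e.
* Two flows are homologous iff their difference lies in the subgroup generated by the
  characteristic flows of the ccw facial walks.
-/

structure Multigraph (V E : Type) where
  src : E → V
  tgt : E → V

namespace Multigraph

variable {V E : Type}

def dtail (M : Multigraph V E) (d : E × Bool) : V := if d.2 then M.src d.1 else M.tgt d.1

def dhead (M : Multigraph V E) (d : E × Bool) : V := if d.2 then M.tgt d.1 else M.src d.1

/-- A closed walk: a nonempty list of darts, consecutively chained, wrapping around. -/
def IsClosedWalk (M : Multigraph V E) (l : List (E × Bool)) : Prop :=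
  l ≠ [] ∧ l.Chain' (fun d d' => M.dhead d = M.dtail d') ∧
    ∀ d ∈ l.head?, ∀ d' ∈ l.getLast?, M.dhead d' = M.dtail d

end Multigraph

/-- Characteristic flow of a walk (list of darts). -/
def charFlow {E : Type} [DecidableEq E] (l : List (E × Bool)) : E → ℤ :=
  fun e => (l.count (e, true) : ℤ) - (l.count (e, false) : ℤ)

/-- The bilinear pairing β between flows of G and flows of G*. -/
def beta {E : Type} [Fintype E] (p q : E → ℤ) : ℤ := ∑ e, p e * q e

structure SurfaceMap (V E F : Type) where
  G : Multigraph V E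
  leftFace : E → F
  rightFace : E → F
  /-- the counterclockwise facial walk of each face -/
  facialWalk : F → List (E × Bool)

namespace SurfaceMap

variable {V E F : Type}

/-- The dual map G*: vertices are the faces of G, and e* goes from the face on the
right of e to the face on the left of e. -/
def dual (M : SurfaceMap V E F) : Multigraph F E := ⟨M.rightFace, M.leftFace⟩

/-- The subgroup 𝔽 of ℤ^E generated by the ccw facial flows. -/
def FacialSubgroup [DecidableEq E] (M : SurfaceMap V E F) : AddSubgroup (E → ℤ) :=
  AddSubgroup.closure (Set.range fun f => charFlow (M.facialWalk f))

/-- Two flows are homologous iff their difference lies in 𝔽. -/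
def Homologous [DecidableEq E] (M : SurfaceMap V E F) (p q : E → ℤ) : Prop :=
  p - q ∈ M.FacialSubgroup

/-- Geometric defining property of the ccw facial walks. -/
def GoodFacialWalks [DecidableEq E] [DecidableEq F] (M : SurfaceMap V E F) : Prop :=
  (∀ f, M.G.IsClosedWalk (M.facialWalk f)) ∧
  ∀ f e, charFlow (M.facialWalk f) e =
    (if M.leftFace e = f then 1 else 0) - (if M.rightFace e = f then 1 else 0)

end SurfaceMap

namespace Aux

open Multigraph

variable {V E F : Type}

def dartFlow [DecidableEq E] (d : E × Bool) : E → ℤ :=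
  fun e => if e = d.1 then (if d.2 then 1 else -1) else 0

lemma charFlow_nil [DecidableEq E] : charFlow ([] : List (E × Bool)) = 0 := by
  funext e; simp [charFlow]

lemma charFlow_cons [DecidableEq E] (d : E × Bool) (l : List (E × Bool)) :
    charFlow (d :: l) = dartFlow d + charFlow l := by
  funext e; rcases d with ⟨a, b⟩
  rcases b <;> by_cases h : e = a <;>
    simp [charFlow, dartFlow, List.count_cons, h, Prod.ext_iff, eq_comm (a := a)] <;> ring

lemma charFlow_append [DecidableEq E] (l l' : List (E × Bool)) :
    charFlow (l ++ l') = charFlow l + charFlow l' := by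
  funext e; simp [charFlow, List.count_append]; ring

def flipDart (d : E × Bool) : E × Bool := (d.1, !d.2)

def revWalk (l : List (E × Bool)) : List (E × Bool) := (l.map flipDart).reverse

lemma dartFlow_flip [DecidableEq E] (d : E × Bool) :
    dartFlow (flipDart d) = -dartFlow d := by
  funext e; rcases d with ⟨a, b⟩; rcases b <;> by_cases h : e = a <;> simp [dartFlow, flipDart, h]

lemma revWalk_cons (d : E × Bool) (l : List (E × Bool)) :
    revWalk (d :: l) = revWalk l ++ [flipDart d] := by
  simp [revWalk]

lemma charFlow_singleton [DecidableEq E] (d : E × Bool) :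
    charFlow [d] = dartFlow d := by
  rw [charFlow_cons, charFlow_nil, add_zero]

lemma charFlow_revWalk [DecidableEq E] (l : List (E × Bool)) :
    charFlow (revWalk l) = -charFlow l := by
  induction l with
  | nil => simp [revWalk, charFlow_nil]
  | cons d l ih =>
      rw [revWalk_cons, charFlow_append, ih, charFlow_singleton, dartFlow_flip,
        charFlow_cons]
      abel


def WalksTo (N : Multigraph F E) : F → List (E × Bool) → F → Prop
  | u, [], v => u = v
  | u, d :: l, v => N.dtail d = u ∧ WalksTo N (N.dhead d) l v

lemma walksTo_single {N : Multigraph F E} (d : E × Bool) :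
    WalksTo N (N.dtail d) [d] (N.dhead d) := ⟨rfl, rfl⟩

lemma walksTo_append {N : Multigraph F E} {u v w : F} {l l' : List (E × Bool)}
    (h : WalksTo N u l v) (h' : WalksTo N v l' w) : WalksTo N u (l ++ l') w := by
  induction l generalizing u with
  | nil => cases h; simpa using h'
  | cons d l ih => exact ⟨h.1, ih h.2⟩

lemma dtail_flip (N : Multigraph F E) (d : E × Bool) : N.dtail (Aux.flipDart d) = N.dhead d := by
  rcases d with ⟨a, b⟩; cases b <;> rfl

lemma dhead_flip (N : Multigraph F E) (d : E × Bool) : N.dhead (Aux.flipDart d) = N.dtail d := by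
  rcases d with ⟨a, b⟩; cases b <;> rfl

lemma walksTo_revWalk {N : Multigraph F E} {u v : F} {l : List (E × Bool)}
    (h : WalksTo N u l v) : WalksTo N v (revWalk l) u := by
  induction l generalizing u with
  | nil => cases h; simp [revWalk, WalksTo]
  | cons d l ih =>
      rw [revWalk_cons]
      refine walksTo_append (ih h.2) ?_
      exact ⟨dtail_flip N d, show N.dhead (flipDart d) = u by rw [dhead_flip, h.1]⟩

lemma walksTo_chain' {N : Multigraph F E} {u v : F} {l : List (E × Bool)}
    (h : WalksTo N u l v) : l.Chain' (fun d d' => N.dhead d = N.dtail d') := by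
  induction l generalizing u with
  | nil => exact List.isChain_nil
  | cons d l ih =>
      rcases l with _ | ⟨d', l⟩
      · exact List.isChain_singleton _
      · exact List.IsChain.cons_cons h.2.1.symm (ih h.2)

lemma walksTo_head {N : Multigraph F E} {u v : F} {l : List (E × Bool)}
    (h : WalksTo N u l v) : ∀ d ∈ l.head?, N.dtail d = u := by
  cases l with
  | nil => simp
  | cons d l => intro d' hd'; simp at hd'; subst hd'; exact h.1

lemma walksTo_getLast {N : Multigraph F E} {u v : F} {l : List (E × Bool)}
    (h : WalksTo N u l v) : ∀ d ∈ l.getLast?, N.dhead d = v := by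
  induction l generalizing u with
  | nil => simp
  | cons d l ih =>
      rcases l with _ | ⟨d', l⟩
      · intro x hx; simp at hx; subst hx; exact h.2
      · intro x hx
        rw [List.getLast?_cons_cons] at hx
        exact ih h.2 x hx

lemma isClosedWalk_of_walksTo {N : Multigraph F E} {u : F} {l : List (E × Bool)}
    (hne : l ≠ []) (h : WalksTo N u l u) : N.IsClosedWalk l := by
  refine ⟨hne, walksTo_chain' h, ?_⟩
  intro d hd d' hd'
  rw [walksTo_getLast h d' hd', walksTo_head h d hd]

lemma walksTo_of_isClosedWalk {N : Multigraph F E} {l : List (E × Bool)}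
    (h : N.IsClosedWalk l) : ∃ u, WalksTo N u l u := by
  obtain ⟨hne, hch, hcl⟩ := h
  rcases l with _ | ⟨d, l⟩
  · exact absurd rfl hne
  refine ⟨N.dtail d, rfl, ?_⟩
  -- prove: chain from a head gives WalksTo to dhead of last, then close up
  have key : ∀ (l : List (E × Bool)) (d : E × Bool),
      (d :: l).Chain' (fun d d' => N.dhead d = N.dtail d') →
      WalksTo N (N.dhead d) l (N.dhead ((d :: l).getLast (by simp))) := by
    intro l
    induction l with
    | nil => intro d _; rfl
    | cons d' l ih =>
        intro d hch
        have h1 : N.dhead d = N.dtail d' := List.isChain_cons_cons.mp hch |>.1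
        have h2 := ih d' (List.isChain_cons_cons.mp hch).2
        refine ⟨h1.symm, ?_⟩
        simpa [List.getLast_cons] using h2
  have h2 := key l d hch
  have h3 : N.dhead ((d :: l).getLast (by simp)) = N.dtail d := by
    apply hcl d (by simp)
    simp [List.getLast?_eq_getLast]
  rwa [h3] at h2


section Beta

variable [Fintype E] [DecidableEq E]

lemma beta_add_left (p q r : E → ℤ) : beta (p + q) r = beta p r + beta q r := by
  simp [beta, add_mul, Finset.sum_add_distrib]

lemma beta_sub_left (p q r : E → ℤ) : beta (p - q) r = beta p r - beta q r := by
  simp [beta, sub_mul, Finset.sum_sub_distrib]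

lemma beta_neg_left (p r : E → ℤ) : beta (-p) r = -beta p r := by
  simp [beta, Finset.sum_neg_distrib]

lemma beta_zero_left (r : E → ℤ) : beta (0 : E → ℤ) r = 0 := by simp [beta]

lemma beta_add_right (p q r : E → ℤ) : beta p (q + r) = beta p q + beta p r := by
  simp [beta, mul_add, Finset.sum_add_distrib]

lemma beta_smul_right (p r : E → ℤ) (n : ℤ) : beta p (n • r) = n * beta p r := by
  simp [beta, Finset.mul_sum]; apply Finset.sum_congr rfl; intros; ring

lemma beta_sum_right {ι : Type*} (p : E → ℤ) (s : Finset ι) (r : ι → E → ℤ) :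
    beta p (∑ i ∈ s, r i) = ∑ i ∈ s, beta p (r i) := by
  classical
  induction s using Finset.induction with
  | empty => simp [beta]
  | insert x s hx ih => rw [Finset.sum_insert hx, beta_add_right, ih, Finset.sum_insert hx]

lemma beta_dartFlow (p : E → ℤ) (d : E × Bool) :
    beta p (dartFlow d) = if d.2 then p d.1 else -p d.1 := by
  rcases d with ⟨a, b⟩
  cases b <;> simp [beta, dartFlow, mul_ite, Finset.sum_ite_eq']

/-- vertex star flow at x in multigraph N -/
def starFlow [DecidableEq F] (N : Multigraph F E) (x : F) : E → ℤ :=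
  fun e => (if N.tgt e = x then 1 else 0) - (if N.src e = x then 1 else 0)

lemma beta_starFlow_dartFlow [DecidableEq F] (N : Multigraph F E) (x : F) (d : E × Bool) :
    beta (starFlow N x) (dartFlow d) =
      (if N.dhead d = x then 1 else 0) - (if N.dtail d = x then 1 else 0) := by
  rcases d with ⟨a, b⟩
  cases b <;> simp [beta_dartFlow, starFlow, Multigraph.dhead, Multigraph.dtail] <;> ring

lemma beta_starFlow_walksTo [DecidableEq F] {N : Multigraph F E} (x : F) {u v : F}
    {l : List (E × Bool)} (h : WalksTo N u l v) :
    beta (starFlow N x) (charFlow l) =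
      (if v = x then 1 else 0) - (if u = x then 1 else 0) := by
  induction l generalizing u with
  | nil => cases h; simp [charFlow_nil, beta]
  | cons d l ih =>
      rw [charFlow_cons, beta_add_right, beta_starFlow_dartFlow, ih h.2, h.1]
      ring

lemma beta_starFlow_closed [DecidableEq F] {N : Multigraph F E} (x : F)
    {l : List (E × Bool)} (h : N.IsClosedWalk l) :
    beta (starFlow N x) (charFlow l) = 0 := by
  obtain ⟨u, hu⟩ := walksTo_of_isClosedWalk h
  rw [beta_starFlow_walksTo x hu]; ring

end Beta


lemma beta_neg_right [Fintype E] (p r : E → ℤ) : beta p (-r) = -beta p r := by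
  simp [beta, Finset.sum_neg_distrib]

section Potential

variable [Fintype E] [DecidableEq E]

def connSetoid (N : Multigraph F E) : Setoid F where
  r u v := ∃ l, WalksTo N u l v
  iseqv := by
    refine ⟨fun u => ⟨[], rfl⟩, ?_, ?_⟩
    · rintro u v ⟨l, h⟩; exact ⟨revWalk l, walksTo_revWalk h⟩
    · rintro u v w ⟨l, h⟩ ⟨l', h'⟩; exact ⟨l ++ l', walksTo_append h h'⟩

lemma pot_spec (N : Multigraph F E) (f : F) :
    ∃ l, WalksTo N ((Quotient.mk (connSetoid N) f).out) l f := by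
  have h : (connSetoid N).r ((Quotient.mk (connSetoid N) f).out) f :=
    Quotient.exact (Quotient.out_eq (Quotient.mk (connSetoid N) f))
  exact h

noncomputable def pot (N : Multigraph F E) (p : E → ℤ) (f : F) : ℤ :=
  beta p (charFlow (Classical.choose (pot_spec N f)))

lemma beta_walks_congr {N : Multigraph F E} {p : E → ℤ}
    (hp : ∀ W, N.IsClosedWalk W → beta p (charFlow W) = 0)
    {u v : F} {l l' : List (E × Bool)} (h : WalksTo N u l v) (h' : WalksTo N u l' v) :
    beta p (charFlow l) = beta p (charFlow l') := by
  have hw : WalksTo N u (l ++ revWalk l') u := walksTo_append h (walksTo_revWalk h')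
  by_cases hne : l ++ revWalk l' = []
  · obtain ⟨h1, h2⟩ := List.append_eq_nil_iff.mp hne
    have h3 : l' = [] := by simpa [revWalk] using h2
    rw [h1, h3]
  · have h0 := hp _ (isClosedWalk_of_walksTo hne hw)
    rw [charFlow_append, beta_add_right, charFlow_revWalk, beta_neg_right] at h0
    linarith

lemma pot_step {N : Multigraph F E} {p : E → ℤ}
    (hp : ∀ W, N.IsClosedWalk W → beta p (charFlow W) = 0)
    {u v : F} {l : List (E × Bool)} (h : WalksTo N u l v) :
    pot N p v = pot N p u + beta p (charFlow l) := by
  have hq : Quotient.mk (connSetoid N) u = Quotient.mk (connSetoid N) v :=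
    Quotient.sound ⟨l, h⟩
  have hout : (Quotient.mk (connSetoid N) u).out = (Quotient.mk (connSetoid N) v).out :=
    congrArg Quotient.out hq
  obtain ⟨cu, hcu, hcu2⟩ : ∃ c, WalksTo N ((Quotient.mk (connSetoid N) u).out) c u ∧
      pot N p u = beta p (charFlow c) :=
    ⟨_, Classical.choose_spec (pot_spec N u), rfl⟩
  obtain ⟨cv, hcv, hcv2⟩ : ∃ c, WalksTo N ((Quotient.mk (connSetoid N) v).out) c v ∧
      pot N p v = beta p (charFlow c) :=
    ⟨_, Classical.choose_spec (pot_spec N v), rfl⟩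
  rw [hout] at hcu
  have hcongr := beta_walks_congr hp (walksTo_append hcu h) hcv
  rw [charFlow_append, beta_add_right] at hcongr
  rw [hcv2, hcu2, ← hcongr]

end Potential

end Aux

/-!
STATEMENT 7: With β(p,d) = Σ_e p_e d_{e*}, and closed walks B*_1,…,B*_{2g} of G* forming a
basis for the homology, the following are equivalent for flows φ, φ' on G:
(1) φ - φ' lies in the subgroup 𝔽 generated by the ccw facial walks of G;
(2) β(φ,W) = β(φ',W) for every closed walk W of G*;
(3) β(φ,F) = β(φ',F) for every ccw facial walk F of G* (faces of G* are indexed by the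
    vertices of G) and β(φ,B*_i) = β(φ',B*_i) for all 1 ≤ i ≤ 2g.

The basis property is expressed as: every closed walk of G* decomposes as an integer
combination of ccw facial flows of G* and the flows of the B*_i.
-/

theorem homologous_tfae {V E F : Type} [Fintype V] [Fintype E] [DecidableEq E] [DecidableEq F]
    [DecidableEq V]
    (g : ℕ) (M : SurfaceMap V E F) (hM : M.GoodFacialWalks)
    (dualFacialWalk : V → List (E × Bool))
    (hdfc : ∀ v, M.dual.IsClosedWalk (dualFacialWalk v))
    (hdff : ∀ v e, charFlow (dualFacialWalk v) e =
      (if M.G.src e = v then 1 else 0) - (if M.G.tgt e = v then 1 else 0))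
    (Bstar : Fin (2 * g) → List (E × Bool))
    (hBc : ∀ i, M.dual.IsClosedWalk (Bstar i))
    (hbasis : ∀ W, M.dual.IsClosedWalk W → ∃ (lam : V → ℤ) (mu : Fin (2 * g) → ℤ),
      charFlow W = (∑ v, lam v • charFlow (dualFacialWalk v)) + ∑ i, mu i • charFlow (Bstar i))
    (φ φ' : E → ℤ) :
    List.TFAE [
      M.Homologous φ φ',
      ∀ W, M.dual.IsClosedWalk W → beta φ (charFlow W) = beta φ' (charFlow W),
      (∀ v, beta φ (charFlow (dualFacialWalk v)) = beta φ' (charFlow (dualFacialWalk v))) ∧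
        ∀ i, beta φ (charFlow (Bstar i)) = beta φ' (charFlow (Bstar i))] := by
  tfae_have 1 → 2 := by
    intro h1 W hW
    have key : ∀ q ∈ M.FacialSubgroup, beta q (charFlow W) = 0 := by
      intro q hq
      refine AddSubgroup.closure_induction ?_ ?_ ?_ ?_ hq
      · rintro x ⟨f, rfl⟩
        show beta (charFlow (M.facialWalk f)) (charFlow W) = 0
        have hfe : charFlow (M.facialWalk f) = Aux.starFlow M.dual f := by
          funext e; rw [hM.2 f e]; rfl
        rw [hfe]
        exact Aux.beta_starFlow_closed f hW
      · exact Aux.beta_zero_left _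
      · intro x y _ _ hx hy
        rw [Aux.beta_add_left, hx, hy, add_zero]
      · intro x _ hx
        rw [Aux.beta_neg_left, hx, neg_zero]
    have h0 := key _ h1
    rw [Aux.beta_sub_left] at h0
    linarith
  tfae_have 2 → 3 := by
    intro h2
    exact ⟨fun v => h2 _ (hdfc v), fun i => h2 _ (hBc i)⟩
  tfae_have 3 → 2 := by
    rintro ⟨h3a, h3b⟩ W hW
    obtain ⟨lam, mu, hdec⟩ := hbasis W hW
    have e1 : beta (φ - φ') (charFlow W) = 0 := by
      rw [hdec, Aux.beta_add_right, Aux.beta_sum_right, Aux.beta_sum_right]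
      have t1 : ∀ v ∈ Finset.univ, beta (φ - φ') (lam v • charFlow (dualFacialWalk v)) = 0 := by
        intro v _
        rw [Aux.beta_smul_right, Aux.beta_sub_left, h3a v, sub_self, mul_zero]
      have t2 : ∀ i ∈ Finset.univ, beta (φ - φ') (mu i • charFlow (Bstar i)) = 0 := by
        intro i _
        rw [Aux.beta_smul_right, Aux.beta_sub_left, h3b i, sub_self, mul_zero]
      rw [Finset.sum_congr rfl t1, Finset.sum_congr rfl t2]
      simp
    rw [Aux.beta_sub_left] at e1
    linarith
  tfae_have 2 → 1 := by
    intro h2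
    have hp0 : ∀ W, M.dual.IsClosedWalk W → beta (φ - φ') (charFlow W) = 0 := by
      intro W hW
      rw [Aux.beta_sub_left, h2 W hW, sub_self]
    let lam : F → ℤ := Aux.pot M.dual (φ - φ')
    have hedge : ∀ e, (φ - φ') e = lam (M.leftFace e) - lam (M.rightFace e) := by
      intro e
      have hw : Aux.WalksTo M.dual (M.rightFace e) [(e, true)] (M.leftFace e) :=
        Aux.walksTo_single (e, true)
      have hstep := Aux.pot_step hp0 hw
      rw [Aux.charFlow_singleton, Aux.beta_dartFlow] at hstep
      simp only [Bool.if_true_left, ite_true, if_true, reduceIte] at hstep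
      show (φ - φ') e = Aux.pot M.dual (φ - φ') (M.leftFace e) -
        Aux.pot M.dual (φ - φ') (M.rightFace e)
      rw [hstep]
      ring
    let S : Finset F := Finset.univ.image M.leftFace ∪ Finset.univ.image M.rightFace
    have hmem : (∑ f ∈ S, lam f • charFlow (M.facialWalk f)) ∈ M.FacialSubgroup := by
      refine AddSubgroup.sum_mem _ ?_
      intro f _
      exact AddSubgroup.zsmul_mem _ (AddSubgroup.subset_closure (Set.mem_range_self f)) _
    have hpe : φ - φ' = ∑ f ∈ S, lam f • charFlow (M.facialWalk f) := by
      funext e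
      rw [Finset.sum_apply]
      have hterm : ∀ f, (lam f • charFlow (M.facialWalk f)) e =
          (if M.leftFace e = f then lam f else 0) -
            (if M.rightFace e = f then lam f else 0) := by
        intro f
        rw [Pi.smul_apply, smul_eq_mul, hM.2 f e]
        by_cases h1 : M.leftFace e = f <;> by_cases h2 : M.rightFace e = f <;>
          simp [h1, h2]
      rw [Finset.sum_congr rfl (fun f _ => hterm f), Finset.sum_sub_distrib,
        Finset.sum_ite_eq, Finset.sum_ite_eq]
      have hL : M.leftFace e ∈ S := by
        exact Finset.mem_union_left _ (Finset.mem_image_of_mem _ (Finset.mem_univ e))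
      have hR : M.rightFace e ∈ S := by
        exact Finset.mem_union_right _ (Finset.mem_image_of_mem _ (Finset.mem_univ e))
      rw [if_pos hL, if_pos hR, hedge e]
    show φ - φ' ∈ M.FacialSubgroup
    rw [hpe]
    exact hmem
  tfae_finish
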